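/- Let S be a finite regular semigroup. Then S has a permutation matching if and only if S has a permutation matching f that preserves Green's H-relation, i.e. such that a H b implies f(a) H f(b) for all a, b ∈ S. -/

import Mathlib

variable {S : Type*}

/-- `b` is an inverse of `a`: `a*b*a = a` and `b*a*b = b`. -/
def IsInverseOf [Semigroup S] (b a : S) : Prop := a * b * a = a ∧ b * a * b = b

/-- `invs a` is the set `V(a)` of inverses of `a`. -/
def invs [Semigroup S] (a : S) : Set S := {b | IsInverseOf b a}

/-- `invsSet A` is `V(A) = ⋃ a ∈ A, V(a)`. -/
def invsSet [Semigroup S] (A : Set S) : Set S := ⋃ a ∈ A, invs a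

/-- A semigroup is regular if every element has an inverse. -/
def IsRegularSemigroup (S : Type*) [Semigroup S] : Prop := ∀ a : S, ∃ b, IsInverseOf b a

/-- A permutation matching: a bijection sending each element to one of its inverses. -/
def IsPermMatching [Semigroup S] (f : S → S) : Prop :=
  Function.Bijective f ∧ ∀ a, f a ∈ invs a

def lSet [Semigroup S] (a : S) : Set S := insert a {x | ∃ s, s * a = x}
def rSet [Semigroup S] (a : S) : Set S := insert a {x | ∃ s, a * s = x}
/-- Green's L relation. -/
def greenL [Semigroup S] (a b : S) : Prop := lSet a = lSet b
/-- Green's R relation. -/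
def greenR [Semigroup S] (a b : S) : Prop := rSet a = rSet b
/-- Green's H relation. -/
def greenH [Semigroup S] (a b : S) : Prop := greenL a b ∧ greenR a b
/-- Green's D relation. -/
def greenD [Semigroup S] (a b : S) : Prop := ∃ c, greenL a c ∧ greenR c b
def dClass [Semigroup S] (a : S) : Set S := {b | greenD a b}
def lClass [Semigroup S] (a : S) : Set S := {b | greenL a b}
def rClass [Semigroup S] (a : S) : Set S := {b | greenR a b}

/-- `spow x n = x^(n+1)` (positive powers in a semigroup). -/
def spow [Semigroup S] (x : S) : ℕ → S
  | 0 => x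
  | n + 1 => spow x n * x

/-- `e` is an idempotent positive power of `x`; in a finite semigroup this
characterises `e = x^ω`. -/
def IsOmega [Semigroup S] (x e : S) : Prop := (∃ k : ℕ, e = spow x k) ∧ e * e = e

/-- `y = x^(ω-1)`: `y = x^m` for the least positive `m` with `x^(m+1)` idempotent
(in a finite semigroup `x^(m+1)` idempotent iff `x^(m+1) = x^ω`). Here `m = k+1`. -/
def IsOmegaMinusOne [Semigroup S] (x y : S) : Prop :=
  ∃ k : ℕ, y = spow x k ∧ spow x (k+1) * spow x (k+1) = spow x (k+1) ∧
    ∀ j < k, ¬ (spow x (j+1) * spow x (j+1) = spow x (j+1))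

section GreenAux
variable [Semigroup S]

lemma isInverseOf_symm {a b : S} (h : IsInverseOf b a) : IsInverseOf a b := ⟨h.2, h.1⟩

lemma mem_rSet_self (a : S) : a ∈ rSet a := Set.mem_insert _ _
lemma mul_mem_rSet (a s : S) : a * s ∈ rSet a := Set.mem_insert_of_mem _ ⟨s, rfl⟩
lemma mem_lSet_self (a : S) : a ∈ lSet a := Set.mem_insert _ _
lemma mul_mem_lSet (a s : S) : s * a ∈ lSet a := Set.mem_insert_of_mem _ ⟨s, rfl⟩

lemma rSet_subset {a b : S} (h : b ∈ rSet a) : rSet b ⊆ rSet a := by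
  rcases h with rfl | ⟨s, rfl⟩
  · exact subset_rfl
  · rintro x (rfl | ⟨t, rfl⟩)
    · exact mul_mem_rSet _ _
    · rw [mul_assoc]; exact mul_mem_rSet _ _

lemma lSet_subset {a b : S} (h : b ∈ lSet a) : lSet b ⊆ lSet a := by
  rcases h with rfl | ⟨s, rfl⟩
  · exact subset_rfl
  · rintro x (rfl | ⟨t, rfl⟩)
    · exact mul_mem_lSet _ _
    · rw [← mul_assoc]; exact mul_mem_lSet _ _

lemma greenR_iff {a b : S} : greenR a b ↔ a ∈ rSet b ∧ b ∈ rSet a := by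
  constructor
  · intro h
    constructor
    · rw [greenR] at h; rw [← h]; exact mem_rSet_self a
    · rw [greenR] at h; rw [h]; exact mem_rSet_self b
  · rintro ⟨h1, h2⟩
    exact Set.Subset.antisymm (rSet_subset h1) (rSet_subset h2)

lemma greenL_iff {a b : S} : greenL a b ↔ a ∈ lSet b ∧ b ∈ lSet a := by
  constructor
  · intro h
    constructor
    · rw [greenL] at h; rw [← h]; exact mem_lSet_self a
    · rw [greenL] at h; rw [h]; exact mem_lSet_self b
  · rintro ⟨h1, h2⟩
    exact Set.Subset.antisymm (lSet_subset h1) (lSet_subset h2)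

lemma left_unit_of_greenR {e x : S} (he : e * e = e) (h : greenR e x) : e * x = x := by
  rcases (greenR_iff.mp h).2 with h' | ⟨s, rfl⟩
  · rw [h']; exact he
  · rw [← mul_assoc, he]

lemma right_unit_of_greenL {e x : S} (he : e * e = e) (h : greenL e x) : x * e = x := by
  rcases (greenL_iff.mp h).2 with h' | ⟨s, rfl⟩
  · rw [h']; exact he
  · rw [mul_assoc, he]

lemma exists_right_mul {e x : S} (he : e * e = e) (h : greenR x e) : ∃ u, x * u = e := by
  rcases (greenR_iff.mp h).2 with h' | ⟨u, hu⟩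
  · exact ⟨x, by rw [← h']; exact he⟩
  · exact ⟨u, hu⟩

lemma exists_left_mul {e x : S} (he : e * e = e) (h : greenL x e) : ∃ v, v * x = e := by
  rcases (greenL_iff.mp h).2 with h' | ⟨v, hv⟩
  · exact ⟨x, by rw [← h']; exact he⟩
  · exact ⟨v, hv⟩

lemma green_of_inv {a b : S} (h : IsInverseOf b a) :
    greenR a (a * b) ∧ greenL b (a * b) ∧ (a * b) * (a * b) = a * b := by
  obtain ⟨h1, h2⟩ := h
  refine ⟨?_, ?_, ?_⟩
  · exact greenR_iff.mpr ⟨Set.mem_insert_of_mem _ ⟨a, h1⟩, mul_mem_rSet a b⟩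
  · refine greenL_iff.mpr ⟨Set.mem_insert_of_mem _ ⟨b, ?_⟩, mul_mem_lSet b a⟩
    rw [← mul_assoc]; exact h2
  · rw [← mul_assoc, h1]

lemma idem_unique_H {e f : S} (he : e * e = e) (hf : f * f = f) (h : greenH e f) : e = f := by
  have h1 : f * e = f := right_unit_of_greenL he h.1
  have h2 : f * e = e := left_unit_of_greenR hf (h.2.symm)
  rw [← h2, h1]

lemma sginv_unique {a b c : S} (hb : IsInverseOf b a) (hc : IsInverseOf c a)
    (h : greenH b c) : b = c := by
  obtain ⟨hb1, hb2⟩ := hb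
  obtain ⟨hc1, hc2⟩ := hc
  have g1 := green_of_inv ⟨hb1, hb2⟩
  have g2 := green_of_inv ⟨hc1, hc2⟩
  have g1' := green_of_inv (isInverseOf_symm ⟨hb1, hb2⟩)
  have g2' := green_of_inv (isInverseOf_symm ⟨hc1, hc2⟩)
  have e12 : a * b = a * c := by
    refine idem_unique_H g1.2.2 g2.2.2 ⟨?_, ?_⟩
    · exact (g1.2.1).symm.trans (h.1.trans g2.2.1)
    · exact (g1.1).symm.trans g2.1
  have f12 : b * a = c * a := by
    refine idem_unique_H g1'.2.2 g2'.2.2 ⟨?_, ?_⟩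
    · exact (g1'.2.1).symm.trans g2'.2.1
    · exact (g1'.1).symm.trans (h.2.trans g2'.1)
  calc b = b * a * b := hb2.symm
    _ = c * a * b := by rw [f12]
    _ = c * (a * b) := mul_assoc c a b
    _ = c * (a * c) := by rw [e12]
    _ = c * a * c := (mul_assoc c a c).symm
    _ = c := hc2

lemma sginv_transport {a x b c : S} (hb : IsInverseOf b a) (hax : greenH a x)
    (hc : IsInverseOf c x) : ∃ b', IsInverseOf b' x ∧ greenH b' b := by
  obtain ⟨hb1, hb2⟩ := hb
  have g := green_of_inv ⟨hb1, hb2⟩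
  have g' := green_of_inv (isInverseOf_symm ⟨hb1, hb2⟩)
  have hRe : greenR (a * b) x := g.1.symm.trans hax.2
  have hLf : greenL (b * a) x := g'.2.1.symm.trans hax.1
  have hex : (a * b) * x = x := left_unit_of_greenR g.2.2 hRe
  have hxf : x * (b * a) = x := right_unit_of_greenL g'.2.2 hLf
  obtain ⟨u, hu⟩ := exists_right_mul g.2.2 hRe.symm
  obtain ⟨v, hv⟩ := exists_left_mul g'.2.2 hLf.symm
  set e := a * b with hedef
  set f := b * a with hfdef
  have hxb' : x * (f * c * e) = e := by
    have h1 : x * (f * c * e) = x * f * c * e := by simp only [mul_assoc]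
    rw [h1, hxf, ← hu]
    have h2 : x * c * (x * u) = (x * c * x) * u := by simp only [mul_assoc]
    rw [h2, hc.1]
  have hb'x : (f * c * e) * x = f := by
    have h1 : (f * c * e) * x = f * c * (e * x) := by simp only [mul_assoc]
    rw [h1, hex, ← hv]
    have h2 : v * x * c * x = v * (x * c * x) := by simp only [mul_assoc]
    rw [h2, hc.1]
  have hinv : IsInverseOf (f * c * e) x := by
    constructor
    · rw [hxb', hex]
    · rw [hb'x]
      calc f * (f * c * e) = f * f * (c * e) := by simp only [mul_assoc]
        _ = f * (c * e) := by rw [g'.2.2]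
        _ = f * c * e := (mul_assoc f c e).symm
  refine ⟨f * c * e, hinv, ?_, ?_⟩
  · have hL : greenL (f * c * e) e :=
      greenL_iff.mpr ⟨mul_mem_lSet e (f * c), Set.mem_insert_of_mem _ ⟨x, hxb'⟩⟩
    exact hL.trans g.2.1.symm
  · have hR : greenR (f * c * e) f :=
      greenR_iff.mpr ⟨Set.mem_insert_of_mem _ ⟨c * e, (mul_assoc f c e).symm⟩,
        Set.mem_insert_of_mem _ ⟨x, hb'x⟩⟩
    exact hR.trans g'.1.symm

def hSetoid (S : Type*) [Semigroup S] : Setoid S where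
  r := greenH
  iseqv := ⟨fun _ => ⟨rfl, rfl⟩, fun h => ⟨h.1.symm, h.2.symm⟩,
    fun h h' => ⟨h.1.trans h'.1, h.2.trans h'.2⟩⟩

def qk (a : S) : Quotient (hSetoid S) := Quotient.mk _ a

def QRel (q q' : Quotient (hSetoid S)) : Prop :=
  ∃ a b : S, qk a = q ∧ qk b = q' ∧ IsInverseOf b a

end GreenAux

/-- Theorem 1.4 (i)⇔(ii). A finite regular semigroup has a permutation
matching iff it has a permutation matching preserving Green's H-relation. -/
theorem stmt_1 (S : Type*) [Semigroup S] [Fintype S]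
    (hreg : IsRegularSemigroup S) :
    (∃ f : S → S, IsPermMatching f) ↔
      ∃ f : S → S, IsPermMatching f ∧ ∀ a b : S, greenH a b → greenH (f a) (f b) := by
  constructor
  · rintro ⟨f, hf⟩
    classical
    haveI : Fintype (Quotient (hSetoid S)) := Quotient.fintype _
    -- transport of inverses to a prescribed H-class
    have invClass : ∀ (x : S) (q' : Quotient (hSetoid S)), QRel (qk x) q' →
        ∃ b, IsInverseOf b x ∧ qk b = q' := by
      rintro x q' ⟨a, b, ha, hb, hinv⟩
      have hax : greenH a x := Quotient.exact ha
      obtain ⟨c, hc⟩ := hreg x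
      obtain ⟨b', hb', hHb⟩ := sginv_transport hinv hax hc
      exact ⟨b', hb', (Quotient.sound hHb).trans hb⟩
    set n : Quotient (hSetoid S) → ℕ :=
      fun q => (Finset.univ.filter fun x : S => qk x = q).card with hn
    have npos : ∀ q, 0 < n q := by
      intro q
      obtain ⟨a, ha⟩ := q.exists_rep
      exact Finset.card_pos.mpr ⟨a, Finset.mem_filter.mpr ⟨Finset.mem_univ _, ha⟩⟩
    have nEq : ∀ q q', QRel q q' → n q = n q' := by
      rintro q q' ⟨a, b, ha, hb, hinv⟩
      have key : ∀ x ∈ (Finset.univ.filter fun x : S => qk x = q),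
          ∃ y, IsInverseOf y x ∧ qk y = q' := by
        intro x hx
        exact invClass x q' ⟨a, b, ha.trans (Finset.mem_filter.mp hx).2.symm, hb, hinv⟩
      choose g0 hg1 hg2 using key
      refine Finset.card_bij g0 ?_ ?_ ?_
      · intro x hx
        exact Finset.mem_filter.mpr ⟨Finset.mem_univ _, hg2 x hx⟩
      · intro x1 h1 x2 h2 heq
        have hH : greenH x1 x2 :=
          Quotient.exact ((Finset.mem_filter.mp h1).2.trans (Finset.mem_filter.mp h2).2.symm)
        refine sginv_unique (isInverseOf_symm (hg1 x1 h1)) ?_ hH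
        rw [heq]
        exact isInverseOf_symm (hg1 x2 h2)
      · intro y hy
        have hby : greenH b y :=
          Quotient.exact (hb.trans (Finset.mem_filter.mp hy).2.symm)
        obtain ⟨c, hc⟩ := hreg y
        obtain ⟨x, hxy, hHx⟩ := sginv_transport (isInverseOf_symm hinv) hby hc
        have hxs : x ∈ (Finset.univ.filter fun x : S => qk x = q) :=
          Finset.mem_filter.mpr ⟨Finset.mem_univ _, (Quotient.sound hHx).trans ha⟩
        refine ⟨x, hxs, ?_⟩
        refine sginv_unique (hg1 x hxs) (isInverseOf_symm hxy) ?_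
        exact Quotient.exact ((hg2 x hxs).trans (Finset.mem_filter.mp hy).2.symm)
    -- fiberwise counting
    have fiber : ∀ B : Finset (Quotient (hSetoid S)),
        (Finset.univ.filter fun x : S => qk x ∈ B).card = ∑ q ∈ B, n q := by
      intro B
      rw [Finset.card_eq_sum_card_fiberwise (f := qk) (t := B) (s := Finset.univ.filter fun x : S => qk x ∈ B)
        (fun x hx => (Finset.mem_filter.mp hx).2)]
      refine Finset.sum_congr rfl fun q hq => ?_
      congr 1
      ext x
      simp only [Finset.mem_filter, Finset.mem_univ, true_and]
      exact ⟨fun h => h.2, fun h => ⟨h ▸ hq, h⟩⟩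
    set N : Finset (Quotient (hSetoid S)) → Finset (Quotient (hSetoid S)) :=
      fun B => Finset.univ.filter (fun q' => ∃ q ∈ B, QRel q q') with hN
    have nOfN : ∀ (B : Finset (Quotient (hSetoid S))) (h : ℕ),
        ∀ q' ∈ N (B.filter fun q => n q = h), n q' = h := by
      intro B h q' hq'
      obtain ⟨q, hq, hrel⟩ := (Finset.mem_filter.mp hq').2
      rw [← nEq q q' hrel]
      exact (Finset.mem_filter.mp hq).2
    have hallCond : ∀ A : Finset (Quotient (hSetoid S)), A.card ≤ (N A).card := by
      intro A
      have sub : ∀ h : ℕ, (A.filter fun q => n q = h).card ≤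
          (N (A.filter fun q => n q = h)).card := by
        intro h
        rcases Finset.eq_empty_or_nonempty (A.filter fun q => n q = h) with he | hne
        · simp [he, hN]
        · have hpos : 0 < h := by
            obtain ⟨q, hq⟩ := hne
            have := npos q
            rwa [(Finset.mem_filter.mp hq).2] at this
          have hsub : (Finset.univ.filter fun x : S =>
                qk x ∈ (A.filter fun q => n q = h)).card ≤
              (Finset.univ.filter fun y : S =>
                qk y ∈ N (A.filter fun q => n q = h)).card := by
            refine Finset.card_le_card_of_injOn f ?_ ?_
            · intro x hx
              refine Finset.mem_filter.mpr ⟨Finset.mem_univ _, ?_⟩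
              refine Finset.mem_filter.mpr ⟨Finset.mem_univ _, ?_⟩
              exact ⟨qk x, (Finset.mem_filter.mp hx).2, ⟨x, f x, rfl, rfl, hf.2 x⟩⟩
            · exact fun x _ y _ hxy => hf.1.1 hxy
          rw [fiber, fiber,
            Finset.sum_congr rfl (fun q hq => (Finset.mem_filter.mp hq).2),
            Finset.sum_congr rfl (nOfN A h),
            Finset.sum_const, Finset.sum_const, smul_eq_mul, smul_eq_mul] at hsub
          exact Nat.le_of_mul_le_mul_right hsub hpos
      have hA : A.card = ∑ h ∈ A.image n, (A.filter fun q => n q = h).card :=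
        Finset.card_eq_sum_card_fiberwise (fun q hq => Finset.mem_image_of_mem n hq)
      have hdisj : (∑ h ∈ A.image n, (N (A.filter fun q => n q = h)).card)
          = ((A.image n).biUnion fun h => N (A.filter fun q => n q = h)).card := by
        refine (Finset.card_biUnion ?_).symm
        intro h1 _ h2 _ hne12
        refine Finset.disjoint_left.mpr fun q' hq1 hq2 => hne12 ?_
        rw [← nOfN A h1 q' hq1, ← nOfN A h2 q' hq2]
      have hsubN : ((A.image n).biUnion fun h => N (A.filter fun q => n q = h)) ⊆ N A := by
        intro q' hq'
        obtain ⟨h, -, hq'⟩ := Finset.mem_biUnion.mp hq'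
        obtain ⟨q, hq, hrel⟩ := (Finset.mem_filter.mp hq').2
        exact Finset.mem_filter.mpr
          ⟨Finset.mem_univ _, q, (Finset.mem_filter.mp hq).1, hrel⟩
      calc A.card = ∑ h ∈ A.image n, (A.filter fun q => n q = h).card := hA
        _ ≤ ∑ h ∈ A.image n, (N (A.filter fun q => n q = h)).card :=
            Finset.sum_le_sum fun h _ => sub h
        _ = _ := hdisj
        _ ≤ (N A).card := Finset.card_le_card hsubN
    obtain ⟨φ, hφinj, hφrel⟩ :=
      (Fintype.all_card_le_filter_rel_iff_exists_injective QRel).mp hallCond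
    have exg : ∀ a : S, ∃ b, IsInverseOf b a ∧ qk b = φ (qk a) :=
      fun a => invClass a _ (hφrel (qk a))
    choose g hg1 hg2 using exg
    have hginj : Function.Injective g := by
      intro a a' heq
      have hq : qk a = qk a' := hφinj (by rw [← hg2, ← hg2, heq])
      refine sginv_unique (isInverseOf_symm (hg1 a)) ?_ (Quotient.exact hq)
      rw [heq]
      exact isInverseOf_symm (hg1 a')
    refine ⟨g, ⟨Finite.injective_iff_bijective.mp hginj, fun a => hg1 a⟩, ?_⟩
    intro a b hab
    exact Quotient.exact (((hg2 a).trans (congrArg φ (Quotient.sound hab))).trans (hg2 b).symm)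
  · rintro ⟨f, hf, -⟩
    exact ⟨f, hf⟩
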